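/- Let F be a number field with adèle ring 𝔸. The natural map 𝔸⟨t⟩₊/F⟨t⟩₊ → 𝔸[[t]]/F[[t]] ≅ ∏_{i=0}^∞ (𝔸/F) is an isomorphism of abelian groups. -/

import Mathlib

/-!
STATEMENT 9: Let `F` be a number field with adèle ring `𝔸`.  The natural map
`𝔸⟨t⟩₊/F⟨t⟩₊ → 𝔸[[t]]/F[[t]] ≅ ∏_{i=0}^∞ (𝔸/F)` is an isomorphism of abelian
groups.

We model `𝔸[[t]]` as `PowerSeries (AdeleRing (RingOfIntegers F) F)`; `𝔸⟨t⟩₊` is the subset of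
power series `x` such that for all but finitely many finite places `v`, every
coefficient of `x` is integral at `v`; `F[[t]]` sits inside via
`PowerSeries.map (algebraMap F 𝔸)`, and `F⟨t⟩₊ = F[[t]] ∩ 𝔸⟨t⟩₊` (for an
`F`-power series `f` the integrality condition is automatic from that of its
adelic image).  The isomorphism statement is expressed as: the coefficientwise
map from `𝔸⟨t⟩₊` to `∏_{n} 𝔸/F` is surjective (every element of
`𝔸[[t]]/F[[t]] ≅ ∏ 𝔸/F` is represented by an element of `𝔸⟨t⟩₊`), and two
elements of `𝔸⟨t⟩₊` have the same image iff they differ by an element of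
`F⟨t⟩₊`.
-/

open IsDedekindDomain NumberField IsDedekindDomain.HeightOneSpectrum

open scoped Multiplicative nonZeroDivisors

section Aux

variable {R : Type*} [CommRing R] [IsDedekindDomain R] {K : Type*} [Field K]
  [Algebra R K] [IsFractionRing R K]

-- density of K in its completion
lemma valued_algebraMap_eq (v : HeightOneSpectrum R) (k : K) :
    Valued.v (algebraMap K (v.adicCompletion K) k) = v.valuation K k :=
  valuedAdicCompletion_eq_valuation' v k

open scoped algebraMap in
lemma exists_valued_close (v : HeightOneSpectrum R) (a : v.adicCompletion K) (γ : (WithZero (Multiplicative ℤ))ˣ) :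
    ∃ k : K, Valued.v (a - algebraMap K (v.adicCompletion K) k) < γ := by
  obtain ⟨ϖ, hϖ⟩ := intValuation_exists_uniformizer v
  have hw : Valued.v (algebraMap R (v.adicCompletion K) ϖ ^ (WithZero.log (γ : WithZero (Multiplicative ℤ))).natAbs)
      = WithZero.exp (-((WithZero.log (γ : WithZero (Multiplicative ℤ))).natAbs : ℤ)) := by
    rw [map_pow, valuedAdicCompletion_eq_valuation, valuation_of_algebraMap, hϖ,
      ← WithZero.exp_nsmul]
    congr 1
    simp
  have hw0 : Valued.v.restrict (algebraMap R (v.adicCompletion K) ϖ ^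
      (WithZero.log (γ : WithZero (Multiplicative ℤ))).natAbs) ≠ 0 := by
    refine ((Valuation.restrict_pos_iff _ _).mpr ?_).ne'
    rw [hw]
    exact WithZero.exp_pos
  have hγ : WithZero.exp (-((WithZero.log (γ : WithZero (Multiplicative ℤ))).natAbs : ℤ)) ≤ (γ : WithZero (Multiplicative ℤ)) := by
    conv_rhs => rw [← WithZero.exp_log γ.ne_zero]
    rw [WithZero.exp_le_exp, Int.natCast_natAbs]
    exact neg_abs_le _
  have h1 : {y : v.adicCompletion K | Valued.v (y - a) < γ} ∈ nhds a := by
    rw [Valued.mem_nhds]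
    refine ⟨Units.mk0 _ hw0, fun y hy => ?_⟩
    have h2 := (Valuation.restrict_lt_iff _).mp hy
    rw [hw] at h2
    exact h2.trans_le hγ
  obtain ⟨y, hy1, k, rfl⟩ := mem_closure_iff_nhds.mp (denseRange_algebraMap K v a) _ h1
  refine ⟨k, ?_⟩
  rw [Valuation.map_sub_swap]
  exact hy1

lemma intValDef_eq_ofAdd (v : HeightOneSpectrum R) {t : R} (ht : t ≠ 0) :
    ∃ m : ℕ, v.intValuationDef t = WithZero.exp (-(m : ℤ)) :=
  ⟨_, v.intValuationDef_if_neg ht⟩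

lemma exists_add_pow_mem (v : HeightOneSpectrum R) {x y : R} (hy : y ≠ 0)
    (h : v.intValuationDef x ≤ v.intValuationDef y) (m : ℕ) :
    ∃ b z : R, z ∈ v.asIdeal ^ m ∧ x = b * y + z := by
  have hspan : Ideal.span {y} ≠ (⊥ : Ideal R) := by
    simpa [Ideal.span_singleton_eq_bot] using hy
  have hirr : Irreducible v.asIdeal := v.irreducible
  have key : ∀ n : ℕ, v.asIdeal ^ n ∣ Ideal.span {y} → x ∈ v.asIdeal ^ n := fun n hn => by
    have h2 : v.intValuationDef y ≤ WithZero.exp (-(n : ℤ)) :=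
      (v.intValuation_le_pow_iff_dvd y n).mpr hn
    have h3 := (v.intValuation_le_pow_iff_dvd x n).mp (h.trans h2)
    exact (Ideal.dvd_iff_le.mp h3) (Ideal.mem_span_singleton_self x)
  have hx : x ∈ Ideal.span {y} ⊔ v.asIdeal ^ m := by
    rcases le_total (m : ℕ∞) (emultiplicity v.asIdeal (Ideal.span {y})) with hm | hm
    · have h1 : v.asIdeal ^ m ∣ Ideal.span {y} := pow_dvd_of_le_emultiplicity hm
      exact Ideal.mem_sup_right (key m h1)
    · rw [sup_comm, irreducible_pow_sup_of_ge hspan hirr m hm]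
      exact key _ (pow_multiplicity_dvd _ _)
  obtain ⟨u, hu, z, hz, hxuz⟩ := Submodule.mem_sup.mp hx
  obtain ⟨b, rfl⟩ := Ideal.mem_span_singleton.mp hu
  exact ⟨b, z, hz, by rw [← hxuz, mul_comm]⟩

lemma intValDef_le_of_mem_pow (v : HeightOneSpectrum R) {z : R} {m : ℕ}
    (hz : z ∈ v.asIdeal ^ m) :
    v.intValuationDef z ≤ WithZero.exp (-(m : ℤ)) :=
  (v.intValuation_le_pow_iff_dvd z m).mpr
    (Ideal.dvd_iff_le.mpr ((Ideal.span_singleton_le_iff_mem _).mpr hz))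

lemma exists_crt_approx (S : Finset (HeightOneSpectrum R)) (x : HeightOneSpectrum R → R)
    {y s : R} (hy : y ≠ 0) (hs : s ≠ 0)
    (h : ∀ v ∈ S, v.intValuationDef (x v) ≤ v.intValuationDef y) :
    ∃ b : R, ∀ v ∈ S, v.intValuationDef (x v - b * y) ≤ v.intValuationDef (s * y) := by
  have hsy : s * y ≠ 0 := mul_ne_zero hs hy
  choose m hm using fun v : HeightOneSpectrum R => intValDef_eq_ofAdd v hsy
  have hbz : ∀ v ∈ S, ∃ b z : R, z ∈ v.asIdeal ^ (m v) ∧ x v = b * y + z := by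
    intro v hv
    exact exists_add_pow_mem v hy (h v hv) (m v)
  choose! b z hz hxbz using hbz
  obtain ⟨c, hc⟩ := IsDedekindDomain.exists_forall_sub_mem_ideal (s := S)
    (fun v => v.asIdeal) m (fun v _ => Ideal.prime_of_isPrime v.ne_bot v.isPrime)
    (fun v _ w _ hvw => fun hid => hvw (HeightOneSpectrum.ext hid))
    (fun v => b v)
  refine ⟨c, fun v hv => ?_⟩
  have hmem : x v - c * y ∈ v.asIdeal ^ (m v) := by
    have h1 : x v - c * y = z v - (c - b v) * y := by rw [hxbz v hv]; ring
    rw [h1]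
    exact sub_mem (hz v hv) (Ideal.mul_mem_right _ _ (hc v hv))
  rw [hm v]
  exact intValDef_le_of_mem_pow v hmem
open scoped algebraMap in
lemma FiniteAdeleRing.exists_nonZeroDivisor_mul_mem (a : FiniteAdeleRing R K) :
    ∃ r : nonZeroDivisors R, ∀ v : HeightOneSpectrum R,
      a v * (algebraMap R K (r : R) : v.adicCompletion K) ∈ v.adicCompletionIntegers K := by
  classical
  have hfin : {v : HeightOneSpectrum R | a v ∉ v.adicCompletionIntegers K}.Finite :=
    Filter.eventually_cofinite.mp a.2
  choose b hb hab using fun v : HeightOneSpectrum R =>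
    adicCompletion.mul_nonZeroDivisor_mem_adicCompletionIntegers (K := K) v (a v)
  refine ⟨⟨∏ v ∈ hfin.toFinset, b v, prod_mem fun v _ => hb v⟩, fun v => ?_⟩
  show a v * (algebraMap R K (∏ v ∈ hfin.toFinset, b v) : v.adicCompletion K) ∈ _

  have hcoe : ∀ s : R, (algebraMap R K s : v.adicCompletion K)
      = algebraMap R (v.adicCompletion K) s := fun s =>
    (IsScalarTower.algebraMap_apply R K (v.adicCompletion K) s).symm
  rw [hcoe]
  by_cases hv : v ∈ hfin.toFinset
  · rw [← Finset.mul_prod_erase _ _ hv, map_mul, ← mul_assoc]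
    exact mul_mem (hab v) (coe_mem_adicCompletionIntegers v _)
  · have ha : a v ∈ v.adicCompletionIntegers K := by
      simpa using hv
    exact mul_mem ha (coe_mem_adicCompletionIntegers v _)

set_option synthInstance.maxHeartbeats 1000000 in
set_option maxHeartbeats 1000000 in
open scoped algebraMap in
lemma FiniteAdeleRing.exists_sub_integral (a : FiniteAdeleRing R K) :
    ∃ k : K, ∀ v : HeightOneSpectrum R,
      a v
        - algebraMap K (v.adicCompletion K) k ∈ v.adicCompletionIntegers K := by
  obtain ⟨r, hrc⟩ := FiniteAdeleRing.exists_nonZeroDivisor_mul_mem a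
  obtain ⟨c, hc⟩ : ∃ c : ∀ v : HeightOneSpectrum R, v.adicCompletionIntegers K,
      ∀ v, a v * (algebraMap R K (r : R) : v.adicCompletion K) = c v :=
    ⟨fun v => ⟨_, hrc v⟩, fun v => rfl⟩
  have hr0 : (r : R) ≠ 0 := nonZeroDivisors.coe_ne_zero r
  have hrv0 : ∀ v : HeightOneSpectrum R, v.intValuationDef (r : R) ≠ 0 :=
    fun v => v.intValuation_ne_zero _ hr0
  have hcomp : ∀ v : HeightOneSpectrum R,
      a v
        * (algebraMap R K (r : R) : v.adicCompletion K) = (c v : v.adicCompletion K) := by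
    intro v
    exact hc v
  -- approximate each c v by an element of K
  choose k hk using fun v : HeightOneSpectrum R =>
    exists_valued_close v ((c v : v.adicCompletion K))
      (Units.mk0 (v.intValuationDef (r : R)) (hrv0 v))
  have hk' : ∀ v : HeightOneSpectrum R,
      Valued.v ((c v : v.adicCompletion K) - algebraMap K (v.adicCompletion K) (k v))
        ≤ v.intValuationDef (r : R) := fun v => le_of_lt (hk v)
  have hk1 : ∀ v : HeightOneSpectrum R, v.valuation K (k v) ≤ 1 := by
    intro v
    rw [← valued_algebraMap_eq]
    have heq : algebraMap K (v.adicCompletion K) (k v)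
        = (c v : v.adicCompletion K)
          - ((c v : v.adicCompletion K) - algebraMap K (v.adicCompletion K) (k v)) := by ring
    rw [heq]
    refine le_trans (Valued.v.map_sub _ _) (max_le (c v).2 ?_)
    exact le_trans (hk' v) (v.intValuation_le_one _)
  -- the finite set of places dividing r
  have hspan : Ideal.span {(r : R)} ≠ (0 : Ideal R) := by
    simpa [Ideal.span_singleton_eq_bot] using hr0
  classical
  let S : Finset (HeightOneSpectrum R) :=
    (Ideal.finite_factors hspan).toFinset
  -- common denominator
  obtain ⟨y, hy⟩ := IsLocalization.exist_integer_multiples (nonZeroDivisors R) S k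
  have hy0 : (y : R) ≠ 0 := nonZeroDivisors.coe_ne_zero y
  have hyv0 : ∀ v : HeightOneSpectrum R, v.intValuationDef (y : R) ≠ 0 :=
    fun v => v.intValuation_ne_zero _ hy0
  choose xx hx using fun (v : HeightOneSpectrum R) (hv : v ∈ S) => hy v hv
  let x : HeightOneSpectrum R → R := fun v => if h : v ∈ S then xx v h else 0
  have hxk : ∀ v ∈ S, algebraMap R K (x v) = algebraMap R K (y : R) * k v := by
    intro v hv
    simp only [x, dif_pos hv]
    rw [hx v hv, Algebra.smul_def]
  have h_le : ∀ v ∈ S, v.intValuationDef (x v) ≤ v.intValuationDef (y : R) := by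
    intro v hv
    have h1 := congrArg (v.valuation K) (hxk v hv)
    rw [Valuation.map_mul, valuation_of_algebraMap, valuation_of_algebraMap,
      intValuation_apply, intValuation_apply] at h1
    rw [h1]
    exact mul_le_of_le_one_right' (hk1 v)
  obtain ⟨b, hb⟩ := exists_crt_approx S x hy0 hr0 h_le
  -- the key estimate
  have key : ∀ v : HeightOneSpectrum R,
      Valued.v ((c v : v.adicCompletion K)
        - algebraMap K (v.adicCompletion K) (algebraMap R K b)) ≤ v.intValuationDef (r : R) := by
    intro v
    by_cases hv : v ∈ S
    · have h2 : v.valuation K (k v - algebraMap R K b) ≤ v.intValuationDef (r : R) := by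
        have hmul : (k v - algebraMap R K b) * algebraMap R K (y : R)
            = algebraMap R K (x v - b * (y : R)) := by
          rw [map_sub, map_mul, sub_mul, mul_comm (k v) _, ← hxk v hv]
        have h3 := congrArg (v.valuation K) hmul
        rw [Valuation.map_mul, valuation_of_algebraMap, valuation_of_algebraMap,
          intValuation_apply, intValuation_apply] at h3
        have h4 : v.valuation K (k v - algebraMap R K b) * v.intValuationDef (y : R)
            ≤ v.intValuationDef (r : R) * v.intValuationDef (y : R) := by
          rw [h3, ← IsDedekindDomain.HeightOneSpectrum.intValuation.map_mul']
          exact hb v hv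
        exact (mul_le_mul_iff_left₀ (zero_lt_iff.mpr (hyv0 v))).mp h4
      have heq : (c v : v.adicCompletion K)
          - algebraMap K (v.adicCompletion K) (algebraMap R K b)
          = ((c v : v.adicCompletion K) - algebraMap K (v.adicCompletion K) (k v))
            + algebraMap K (v.adicCompletion K) (k v - algebraMap R K b) := by
        rw [map_sub]
        ring
      rw [heq]
      refine le_trans (Valued.v.map_add _ _) (max_le (hk' v) ?_)
      rw [valued_algebraMap_eq]
      exact h2
    · have hr1 : v.intValuationDef (r : R) = 1 := by
        have hle := v.intValuation_le_one (r : R)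
        rcases lt_or_eq_of_le hle with hlt | hEq
        · exfalso
          apply hv
          rw [v.intValuation_lt_one_iff_dvd] at hlt
          simp only [S, Set.Finite.mem_toFinset, Set.mem_setOf_eq]
          exact hlt
        · exact hEq
      rw [hr1]
      refine le_trans (Valued.v.map_sub _ _) (max_le (c v).2 ?_)
      rw [valued_algebraMap_eq]
      exact v.valuation_le_one b
  -- conclusion
  refine ⟨algebraMap R K b / algebraMap R K (r : R), fun v => ?_⟩
  have hrhat : Valued.v (algebraMap K (v.adicCompletion K) (algebraMap R K (r : R)))
      = v.intValuationDef (r : R) := by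
    rw [valued_algebraMap_eq, valuation_of_algebraMap, intValuation_apply]
  have hrne : (algebraMap K (v.adicCompletion K) (algebraMap R K (r : R))) ≠ 0 := by
    intro h0
    rw [h0, map_zero] at hrhat
    exact hrv0 v hrhat.symm
  have hcomp' : a v
      * algebraMap K (v.adicCompletion K) (algebraMap R K (r : R))
      = (c v : v.adicCompletion K) := hcomp v
  have hav : a v
      - algebraMap K (v.adicCompletion K) (algebraMap R K b / algebraMap R K (r : R))
      = ((c v : v.adicCompletion K)
          - algebraMap K (v.adicCompletion K) (algebraMap R K b))
        / algebraMap K (v.adicCompletion K) (algebraMap R K (r : R)) := by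
    rw [map_div₀]
    rw [eq_div_iff hrne, sub_mul, div_mul_cancel₀ _ hrne, hcomp']
  rw [mem_adicCompletionIntegers, hav, map_div₀, hrhat]
  rw [div_le_one₀ (zero_lt_iff.mpr (hrv0 v))]
  exact key v

lemma FiniteAdeleRing.coe_sub' (x y : FiniteAdeleRing R K) :
    ∀ v, (x - y : FiniteAdeleRing R K) v = x v - y v := fun _ => rfl


end Aux

variable (F : Type*) [Field F] [NumberField F]

lemma AdeleRing.exists_sub_integral (a : AdeleRing (RingOfIntegers F) F) :
    ∃ k : F, ∀ v : HeightOneSpectrum (RingOfIntegers F),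
      (a - algebraMap F (AdeleRing (RingOfIntegers F) F) k).2 v
        ∈ v.adicCompletionIntegers F := by
  obtain ⟨k, hk⟩ := FiniteAdeleRing.exists_sub_integral (a.2)
  refine ⟨k, fun v => ?_⟩
  have h1 : (a - algebraMap F (AdeleRing (RingOfIntegers F) F) k).2
      = a.2 - algebraMap F (FiniteAdeleRing (RingOfIntegers F) F) k := rfl
  rw [h1, FiniteAdeleRing.coe_sub']
  have h2 : (algebraMap F (FiniteAdeleRing (RingOfIntegers F) F) k :
      FiniteAdeleRing (RingOfIntegers F) F) v
      = algebraMap F (v.adicCompletion F) k := rfl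
  rw [h2]
  exact hk v


/-- The condition that a power series with adelic coefficients lies in `𝔸⟨t⟩₊`:
at all but finitely many finite places, all of its coefficients are integral. -/
def IsRestrictedPS (x : PowerSeries (AdeleRing (RingOfIntegers F) F)) : Prop :=
  {v : HeightOneSpectrum (RingOfIntegers F) |
    ¬ ∀ n : ℕ, (PowerSeries.coeff n x).2 v ∈ v.adicCompletionIntegers F}.Finite

theorem adelic_power_series_quotient_iso :
    -- surjectivity: every `𝔸[[t]]` class mod `F[[t]]` has a representative in `𝔸⟨t⟩₊`
    (∀ x : PowerSeries (AdeleRing (RingOfIntegers F) F), ∃ g : PowerSeries (AdeleRing (RingOfIntegers F) F),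
      IsRestrictedPS F g ∧ ∃ f : PowerSeries F,
        x = g + PowerSeries.map (algebraMap F (AdeleRing (RingOfIntegers F) F)) f) ∧
    -- injectivity: if two elements of `𝔸⟨t⟩₊` differ by an element of `F[[t]]`,
    -- then they differ by an element of `F⟨t⟩₊`
    (∀ x y : PowerSeries (AdeleRing (RingOfIntegers F) F), IsRestrictedPS F x → IsRestrictedPS F y →
      (∃ f : PowerSeries F, x - y = PowerSeries.map (algebraMap F (AdeleRing (RingOfIntegers F) F)) f) →
      (∃ f : PowerSeries F,
        x - y = PowerSeries.map (algebraMap F (AdeleRing (RingOfIntegers F) F)) f ∧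
        {v : HeightOneSpectrum (RingOfIntegers F) |
          ¬ ∀ n : ℕ, v.valuation F (PowerSeries.coeff n f) ≤ 1}.Finite)) := by
  constructor
  · intro x
    choose kf hkf using fun n : ℕ => AdeleRing.exists_sub_integral F (PowerSeries.coeff n x)
    refine ⟨x - PowerSeries.map (algebraMap F (AdeleRing (RingOfIntegers F) F)) (PowerSeries.mk kf),
      ?_, PowerSeries.mk kf, by ring⟩
    have hempty : {v : HeightOneSpectrum (RingOfIntegers F) |
        ¬ ∀ n : ℕ, (PowerSeries.coeff n (x - PowerSeries.map (algebraMap F (AdeleRing (RingOfIntegers F) F))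
            (PowerSeries.mk kf))).2 v
            ∈ v.adicCompletionIntegers F} = ∅ := by
      rw [Set.eq_empty_iff_forall_notMem]
      intro v hv
      apply hv
      intro n
      have h1 : PowerSeries.coeff n (x - PowerSeries.map (algebraMap F (AdeleRing (RingOfIntegers F) F))
          (PowerSeries.mk kf))
          = PowerSeries.coeff n x - algebraMap F (AdeleRing (RingOfIntegers F) F) (kf n) := by
        rw [map_sub, PowerSeries.coeff_map, PowerSeries.coeff_mk]
      rw [h1]
      exact hkf n v
    unfold IsRestrictedPS
    rw [hempty]
    exact Set.finite_empty
  · rintro x y hx hy ⟨f, hf⟩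
    refine ⟨f, hf, ?_⟩
    refine Set.Finite.subset (hx.union hy) ?_
    intro v hv
    by_contra hvS
    apply hv
    simp only [Set.mem_union, Set.mem_setOf_eq, not_or, not_not] at hvS
    obtain ⟨hvx, hvy⟩ := hvS
    intro n
    have h1 : algebraMap F (AdeleRing (RingOfIntegers F) F) (PowerSeries.coeff n f) = PowerSeries.coeff n (x - y) := by
      rw [hf, PowerSeries.coeff_map]
    have h2 : PowerSeries.coeff n (x - y) = PowerSeries.coeff n x - PowerSeries.coeff n y := map_sub _ _ _
    have h3 : (PowerSeries.coeff n (x - y)).2 v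
        ∈ v.adicCompletionIntegers F := by
      rw [h2]
      have h4 : (PowerSeries.coeff n x - PowerSeries.coeff n y).2
          = (PowerSeries.coeff n x).2 - (PowerSeries.coeff n y).2 := rfl
      rw [h4, FiniteAdeleRing.coe_sub']
      exact sub_mem (hvx n) (hvy n)
    rw [← h1] at h3
    have h5 : ((algebraMap F (AdeleRing (RingOfIntegers F) F) (PowerSeries.coeff n f)).2 :
        FiniteAdeleRing (RingOfIntegers F) F) v
        = algebraMap F (v.adicCompletion F) (PowerSeries.coeff n f) := rfl
    rw [h5] at h3
    rw [← valued_algebraMap_eq v (PowerSeries.coeff n f)]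
    exact h3
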